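/- Let G be a group, φ an endomorphism of G, and suppose there exists n ≥ 0 such that φ restricted to φⁿ(G) is injective. Then the ascending HNN extension HNN_φ(G) is isomorphic to the ascending HNN extension HNN_{φ'}(φⁿ(G)), where φ' is the restriction of φ to φⁿ(G). -/

import Mathlib

/-- The relations of the ascending HNN extension (mapping torus) of an endomorphism `φ`
of a group `G`: the multiplication table of `G` together with `t g t⁻¹ = φ g`. -/
def hnnRel {G : Type} [Group G] (φ : G →* G) : Set (FreeGroup (G ⊕ Unit)) :=
  { r | (∃ g h : G, r = FreeGroup.of (Sum.inl g) * FreeGroup.of (Sum.inl h) *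
            (FreeGroup.of (Sum.inl (g * h)))⁻¹) ∨
        (∃ g : G, r = FreeGroup.of (Sum.inr ()) * FreeGroup.of (Sum.inl g) *
            (FreeGroup.of (Sum.inr ()))⁻¹ * (FreeGroup.of (Sum.inl (φ g)))⁻¹) }

/-- The ascending HNN extension `HNN_φ(G)`. -/
def HNNExt {G : Type} [Group G] (φ : G →* G) : Type := PresentedGroup (hnnRel φ)

instance {G : Type} [Group G] (φ : G →* G) : Group (HNNExt φ) := by
  unfold HNNExt; infer_instance

/-- The image of `g ∈ G` in the HNN extension. -/
def hnnBase {G : Type} [Group G] (φ : G →* G) (g : G) : HNNExt φ :=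
  PresentedGroup.of (Sum.inl g)

/-- The stable letter `t` of the HNN extension. -/
def hnnT {G : Type} [Group G] (φ : G →* G) : HNNExt φ :=
  PresentedGroup.of (Sum.inr ())

/-- The `n`-th power `φⁿ` of an endomorphism. -/
def iterHom {G : Type} [Group G] (φ : G →* G) : ℕ → (G →* G)
  | 0 => MonoidHom.id G
  | n + 1 => φ.comp (iterHom φ n)

theorem iterHom_comm {G : Type} [Group G] (φ : G →* G) (n : ℕ) (g : G) :
    φ (iterHom φ n g) = iterHom φ n (φ g) := by
  induction n with
  | zero => rfl
  | succ n ih => simp [iterHom, ih]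

/-- The restriction `φ' : φⁿ(G) → φⁿ(G)` of `φ` to the image subgroup `φⁿ(G)`. -/
def resEndo {G : Type} [Group G] (φ : G →* G) (n : ℕ) :
    (iterHom φ n).range →* (iterHom φ n).range :=
  MonoidHom.codRestrict (φ.domRestrict (iterHom φ n).range) (iterHom φ n).range
    (by rintro ⟨x, g, rfl⟩; exact ⟨φ g, (iterHom_comm φ n g).symm⟩)


section Aux

variable {G : Type} [Group G] (φ : G →* G)

theorem hnnRel_eq_one {r : FreeGroup (G ⊕ Unit)} (hr : r ∈ hnnRel φ) :
    (PresentedGroup.mk (hnnRel φ) r : HNNExt φ) = 1 := by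
  have : r ∈ Subgroup.normalClosure (hnnRel φ) := Subgroup.subset_normalClosure hr
  exact (QuotientGroup.eq_one_iff r).mpr this

theorem hnnBase_mul (g h : G) :
    hnnBase φ g * hnnBase φ h = hnnBase φ (g * h) := by
  have := hnnRel_eq_one φ (r := FreeGroup.of (Sum.inl g) * FreeGroup.of (Sum.inl h) *
      (FreeGroup.of (Sum.inl (g * h)))⁻¹) (Or.inl ⟨g, h, rfl⟩)
  simp only [map_mul, map_inv] at this
  have h2 : hnnBase φ g * hnnBase φ h * (hnnBase φ (g * h))⁻¹ = 1 := this
  rwa [mul_inv_eq_one] at h2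

theorem hnnT_conj (g : G) :
    hnnT φ * hnnBase φ g * (hnnT φ)⁻¹ = hnnBase φ (φ g) := by
  have := hnnRel_eq_one φ (r := FreeGroup.of (Sum.inr ()) * FreeGroup.of (Sum.inl g) *
      (FreeGroup.of (Sum.inr ()))⁻¹ * (FreeGroup.of (Sum.inl (φ g)))⁻¹) (Or.inr ⟨g, rfl⟩)
  simp only [map_mul, map_inv] at this
  have h2 : hnnT φ * hnnBase φ g * (hnnT φ)⁻¹ * (hnnBase φ (φ g))⁻¹ = 1 := this
  rwa [mul_inv_eq_one] at h2

theorem hnnT_pow_conj (k : ℕ) (g : G) :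
    (hnnT φ) ^ k * hnnBase φ g * ((hnnT φ) ^ k)⁻¹ = hnnBase φ (iterHom φ k g) := by
  induction k with
  | zero => simp [iterHom]
  | succ k ih =>
    have : (hnnT φ) ^ (k + 1) = hnnT φ * (hnnT φ) ^ k := by rw [pow_succ'] 
    rw [this, mul_inv_rev]
    calc hnnT φ * (hnnT φ) ^ k * hnnBase φ g * (((hnnT φ) ^ k)⁻¹ * (hnnT φ)⁻¹)
        = hnnT φ * ((hnnT φ) ^ k * hnnBase φ g * ((hnnT φ) ^ k)⁻¹) * (hnnT φ)⁻¹ := by group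
      _ = hnnT φ * hnnBase φ (iterHom φ k g) * (hnnT φ)⁻¹ := by rw [ih]
      _ = hnnBase φ (φ (iterHom φ k g)) := hnnT_conj φ _
      _ = hnnBase φ (iterHom φ (k + 1) g) := rfl

theorem iterHom_res_val (n k : ℕ) (x : (iterHom φ n).range) :
    ((iterHom (resEndo φ n) k x : (iterHom φ n).range) : G) = iterHom φ k (x : G) := by
  induction k with
  | zero => rfl
  | succ k ih =>
    show ((resEndo φ n) (iterHom (resEndo φ n) k x) : G) = φ (iterHom φ k (x : G))
    rw [← ih]; rfl

end Aux

/-- If `φ` is injective on `φⁿ(G)`, then `HNN_φ(G) ≅ HNN_{φ'}(φⁿ(G))` where `φ'`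
is the restriction of `φ` to `φⁿ(G)`. -/
theorem hnn_iso_hnn_of_restriction {G : Type} [Group G] (φ : G →* G) (n : ℕ)
    (hinj : Function.Injective (resEndo φ n)) :
    Nonempty (HNNExt φ ≃* HNNExt (resEndo φ n)) := by
  classical
  set ψ := resEndo φ n with hψ
  set T : HNNExt ψ := hnnT ψ with hT
  set t : HNNExt φ := hnnT φ with ht
  -- forward generator map
  set f : G ⊕ Unit → HNNExt ψ := fun x => match x with
    | Sum.inl g => (T ^ n)⁻¹ * hnnBase ψ ⟨iterHom φ n g, ⟨g, rfl⟩⟩ * T ^ n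
    | Sum.inr _ => T with hf
  have hF : ∀ r ∈ hnnRel φ, FreeGroup.lift f r = 1 := by
    rintro r (⟨g, h, rfl⟩ | ⟨g, rfl⟩)
    · simp only [map_mul, map_inv, FreeGroup.lift_apply_of, hf]
      have hb : hnnBase ψ ⟨iterHom φ n g, ⟨g, rfl⟩⟩ * hnnBase ψ ⟨iterHom φ n h, ⟨h, rfl⟩⟩
          = hnnBase ψ ⟨iterHom φ n g * iterHom φ n h, mul_mem ⟨g, rfl⟩ ⟨h, rfl⟩⟩ := by
        rw [hnnBase_mul]; rfl
      calc ((T ^ n)⁻¹ * hnnBase ψ ⟨iterHom φ n g, ⟨g, rfl⟩⟩ * T ^ n) *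
            ((T ^ n)⁻¹ * hnnBase ψ ⟨iterHom φ n h, ⟨h, rfl⟩⟩ * T ^ n) *
            ((T ^ n)⁻¹ * hnnBase ψ ⟨iterHom φ n g * iterHom φ n h,
                mul_mem ⟨g, rfl⟩ ⟨h, rfl⟩⟩ * T ^ n)⁻¹
          = (T ^ n)⁻¹ * (hnnBase ψ ⟨iterHom φ n g, ⟨g, rfl⟩⟩ *
              hnnBase ψ ⟨iterHom φ n h, ⟨h, rfl⟩⟩) *
              (hnnBase ψ ⟨iterHom φ n g * iterHom φ n h,
                mul_mem ⟨g, rfl⟩ ⟨h, rfl⟩⟩)⁻¹ * T ^ n := by group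
        _ = 1 := by rw [hb]; group
    · simp only [map_mul, map_inv, FreeGroup.lift_apply_of, hf]
      have hcomm : T * (T ^ n)⁻¹ = (T ^ n)⁻¹ * T := ((Commute.refl T).pow_right n).inv_right.eq
      have hconj : T * hnnBase ψ ⟨iterHom φ n g, ⟨g, rfl⟩⟩ * T⁻¹
          = hnnBase ψ ⟨iterHom φ n (φ g), ⟨φ g, rfl⟩⟩ := by
        rw [hnnT_conj]
        congr 1
        exact Subtype.ext (iterHom_comm φ n g)
      calc T * ((T ^ n)⁻¹ * hnnBase ψ ⟨iterHom φ n g, ⟨g, rfl⟩⟩ * T ^ n) * T⁻¹ *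
            ((T ^ n)⁻¹ * hnnBase ψ ⟨iterHom φ n (φ g), ⟨φ g, rfl⟩⟩ * T ^ n)⁻¹
          = (T * (T ^ n)⁻¹) * hnnBase ψ ⟨iterHom φ n g, ⟨g, rfl⟩⟩ * T ^ n * T⁻¹ *
            ((T ^ n)⁻¹ * hnnBase ψ ⟨iterHom φ n (φ g), ⟨φ g, rfl⟩⟩ * T ^ n)⁻¹ := by group
        _ = (T ^ n)⁻¹ * (T * hnnBase ψ ⟨iterHom φ n g, ⟨g, rfl⟩⟩ * T⁻¹) * T ^ n *
            ((T ^ n)⁻¹ * hnnBase ψ ⟨iterHom φ n (φ g), ⟨φ g, rfl⟩⟩ * T ^ n)⁻¹ := by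
            rw [hcomm]; group
        _ = 1 := by rw [hconj]; group
  -- backward generator map
  set b : ((iterHom φ n).range ⊕ Unit) → HNNExt φ := fun x => match x with
    | Sum.inl g => hnnBase φ (g : G)
    | Sum.inr _ => t with hb
  have hB : ∀ r ∈ hnnRel ψ, FreeGroup.lift b r = 1 := by
    rintro r (⟨g, h, rfl⟩ | ⟨g, rfl⟩)
    · simp only [map_mul, map_inv, FreeGroup.lift_apply_of, hb]
      have : hnnBase φ (g : G) * hnnBase φ (h : G) = hnnBase φ ((g * h : (iterHom φ n).range) : G) :=
        hnnBase_mul φ _ _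
      rw [mul_inv_eq_one, this]
    · simp only [map_mul, map_inv, FreeGroup.lift_apply_of, hb]
      rw [mul_inv_eq_one]
      have : t * hnnBase φ (g : G) * t⁻¹ = hnnBase φ (φ (g : G)) := hnnT_conj φ _
      rw [this]; rfl
  set F : HNNExt φ →* HNNExt ψ := PresentedGroup.toGroup hF with hFdef
  set B : HNNExt ψ →* HNNExt φ := PresentedGroup.toGroup hB with hBdef
  have hFof : ∀ x, F (PresentedGroup.of x) = f x := fun x => PresentedGroup.toGroup.of hF
  have hBof : ∀ x, B (PresentedGroup.of x) = b x := fun x => PresentedGroup.toGroup.of hB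
  have hBF : B.comp F = MonoidHom.id (HNNExt φ) := by
    apply PresentedGroup.ext
    rintro (g | ⟨⟩)
    · show B (F (hnnBase φ g)) = hnnBase φ g
      rw [show F (hnnBase φ g) = f (Sum.inl g) from hFof _]
      simp only [hf, map_mul, map_inv, map_pow]
      rw [show B T = t from hBof (Sum.inr ()),
        show B (hnnBase ψ ⟨iterHom φ n g, ⟨g, rfl⟩⟩) = hnnBase φ (iterHom φ n g) from
          hBof (Sum.inl _)]
      have := hnnT_pow_conj φ n g
      rw [← this, ← ht]; group
    · show B (F (hnnT φ)) = hnnT φ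
      rw [show F (hnnT φ) = T from hFof (Sum.inr ())]
      exact hBof (Sum.inr ())
  have hFB : F.comp B = MonoidHom.id (HNNExt ψ) := by
    apply PresentedGroup.ext
    rintro (x | ⟨⟩)
    · show F (B (hnnBase ψ x)) = hnnBase ψ x
      rw [show B (hnnBase ψ x) = hnnBase φ (x : G) from hBof (Sum.inl x),
        show F (hnnBase φ (x : G)) = f (Sum.inl (x : G)) from hFof _]
      simp only [hf]
      have key : iterHom ψ n x = ⟨iterHom φ n (x : G), ⟨(x : G), rfl⟩⟩ :=
        Subtype.ext (iterHom_res_val φ n n x)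
      have := hnnT_pow_conj ψ n x
      rw [key] at this
      rw [← this, ← hT]; group
    · show F (B (hnnT ψ)) = hnnT ψ
      rw [show B (hnnT ψ) = t from hBof (Sum.inr ())]
      exact hFof (Sum.inr ())
  exact ⟨MonoidHom.toMulEquiv F B hBF hFB⟩
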